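/- Closing a DNF over finite-domain variables under multi-valued consensus and removing subsumed terms yields exactly the set of prime implicants of the DNF. -/

import Mathlib

open scoped Classical

/-- Formulas over finite-domain variables: each variable `X : V` has domain `D X`.
A literal of `X` is (intended to be) a nonempty proper subset of `D X`'s states. -/
inductive Form (V : Type) (D : V → Type) : Type where
  | top : Form V D
  | bot : Form V D
  | lit : (X : V) → Set (D X) → Form V D
  | neg : Form V D → Form V D
  | and : Form V D → Form V D → Form V D
  | or : Form V D → Form V D → Form V D

namespace Form

variable {V : Type} {D : V → Type}

/-- Satisfaction of a formula by a world. -/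
def sat (w : ∀ X, D X) : Form V D → Prop
  | top => True
  | bot => False
  | lit X s => w X ∈ s
  | neg φ => ¬ sat w φ
  | and φ ψ => sat w φ ∧ sat w ψ
  | or φ ψ => sat w φ ∨ sat w ψ

/-- Conditioning `Δ|x` of a formula on state `x` of variable `X`: each `X`-literal
`ℓ` is replaced by `⊤` if `x ∈ ℓ` and by `⊥` otherwise. -/
noncomputable def cond (X : V) (x : D X) : Form V D → Form V D
  | top => top
  | bot => bot
  | lit Y s => if h : X = Y then (if h ▸ x ∈ s then top else bot) else lit Y s
  | neg φ => neg (cond X x φ)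
  | and φ ψ => and (cond X x φ) (cond X x ψ)
  | or φ ψ => or (cond X x φ) (cond X x ψ)

/-- The selection operator `⊓x·Δ := (Δ|x) ∧ Δ`. -/
noncomputable def sel (X : V) (x : D X) (Δ : Form V D) : Form V D :=
  and (cond X x Δ) Δ

/-- Logical equivalence of formulas (same models). -/
def equiv (φ ψ : Form V D) : Prop := ∀ w, sat w φ ↔ sat w ψ

/-- Variable `X` occurs (appears) in the formula. -/
def occurs (X : V) : Form V D → Prop
  | top => False
  | bot => False
  | lit Y _ => Y = X
  | neg φ => occurs X φ
  | and φ ψ => occurs X φ ∨ occurs X ψ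
  | or φ ψ => occurs X φ ∨ occurs X ψ

/-- NNF: negation-free, and every literal is a nonempty proper subset of states. -/
def isNNF : Form V D → Prop
  | top => True
  | bot => True
  | lit _ s => s.Nonempty ∧ s ≠ Set.univ
  | neg _ => False
  | and φ ψ => isNNF φ ∧ isNNF ψ
  | or φ ψ => isNNF φ ∧ isNNF ψ

/-- The `X`-literal `s` occurs in the formula. -/
def litOccurs (X : V) (s : Set (D X)) : Form V D → Prop
  | top => False
  | bot => False
  | lit Y t => ∃ h : Y = X, h ▸ t = s
  | neg φ => litOccurs X s φ
  | and φ ψ => litOccurs X s φ ∨ litOccurs X s ψ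
  | or φ ψ => litOccurs X s φ ∨ litOccurs X s ψ

/-- Every literal in the formula is implied by the instance `I`
(i.e., contains `I`'s state of its variable). -/
def litsImp (I : ∀ X, D X) : Form V D → Prop
  | top => True
  | bot => True
  | lit X s => I X ∈ s
  | neg φ => litsImp I φ
  | and φ ψ => litsImp I φ ∧ litsImp I ψ
  | or φ ψ => litsImp I φ ∧ litsImp I ψ

/-- Iterated selection `⊓` over a list of variables, using states from `v`. -/
noncomputable def selList (v : ∀ X, D X) : List V → Form V D → Form V D
  | [], Δ => Δ
  | X :: L, Δ => sel X (v X) (selList v L Δ)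

/-- The general reason `⊓I·Δ`: selection applied for all states of instance `I`. -/
noncomputable def selAll [Fintype V] (I : ∀ X, D X) (Δ : Form V D) : Form V D :=
  selList I (Finset.univ : Finset V).toList Δ

noncomputable def listAnd : List (Form V D) → Form V D
  | [] => top
  | φ :: L => and φ (listAnd L)

/-- Universal literal quantification `∀x·Δ := (Δ|x) ∧ ⋀_{y ≠ x} (x ∨ Δ|y)`. -/
noncomputable def uq (X : V) [Fintype (D X)] (x : D X) (Δ : Form V D) : Form V D :=
  letI : DecidableEq (D X) := fun _ _ => Classical.propDecidable _
  and (cond X x Δ)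
    (listAnd ((((Finset.univ : Finset (D X)).erase x).toList).map
      (fun y => or (lit X ({x} : Set (D X))) (cond X y Δ))))

/-- Iterated universal literal quantification over a list of variables. -/
noncomputable def uqList [∀ X, Fintype (D X)] (v : ∀ X, D X) : List V → Form V D → Form V D
  | [], Δ => Δ
  | X :: L, Δ => uq X (v X) (uqList v L Δ)

/-- The complete reason `∀I·Δ`. -/
noncomputable def uqAll [Fintype V] [∀ X, Fintype (D X)] (I : ∀ X, D X) (Δ : Form V D) :
    Form V D :=
  uqList I (Finset.univ : Finset V).toList Δ

end Form

/-- A term: a conjunction of literals over distinct variables. Variable `X` is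
mentioned iff `lits X ≠ univ`; each literal is nonempty (terms are consistent). -/
structure MvTerm (V : Type) (D : V → Type) : Type where
  lits : ∀ X, Set (D X)
  nonempty : ∀ X, (lits X).Nonempty

/-- A clause: a disjunction of literals over distinct variables. Variable `X` is
mentioned iff `lits X ≠ ∅`; each literal is proper (clauses are never valid). -/
structure MvClause (V : Type) (D : V → Type) : Type where
  lits : ∀ X, Set (D X)
  proper : ∀ X, lits X ≠ Set.univ

namespace MvTerm

variable {V : Type} {D : V → Type}

def tsat (w : ∀ X, D X) (τ : MvTerm V D) : Prop := ∀ X, w X ∈ τ.lits X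

def vars (τ : MvTerm V D) : Set V := {X | τ.lits X ≠ Set.univ}

/-- A simple term assigns a single state to each of its variables. -/
def simple (τ : MvTerm V D) : Prop :=
  ∀ X, τ.lits X ≠ Set.univ → ∃ x, τ.lits X = ({x} : Set (D X))

end MvTerm

namespace MvClause

variable {V : Type} {D : V → Type}

def csat (w : ∀ X, D X) (σ : MvClause V D) : Prop := ∃ X, w X ∈ σ.lits X

def vars (σ : MvClause V D) : Set V := {X | σ.lits X ≠ (∅ : Set (D X))}

/-- A simple clause: all its literals are single states. -/
def simple (σ : MvClause V D) : Prop :=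
  ∀ X, σ.lits X ≠ (∅ : Set (D X)) → ∃ x, σ.lits X = ({x} : Set (D X))

end MvClause

section PrimeDefs

variable {V : Type} {D : V → Type}

def termImp (τ τ' : MvTerm V D) : Prop := ∀ w, τ.tsat w → τ'.tsat w

def clauseImp (σ σ' : MvClause V D) : Prop := ∀ w, σ.csat w → σ'.csat w

/-- A prime implicant of the set of worlds `M`: a ⊨-maximal term implying `M`. -/
def isPrimeImplicantOf (M : (∀ X, D X) → Prop) (τ : MvTerm V D) : Prop :=
  (∀ w, τ.tsat w → M w) ∧
  ∀ τ' : MvTerm V D, (∀ w, τ'.tsat w → M w) → termImp τ τ' → τ' = τ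

/-- A prime implicate of the set of worlds `M`: a ⊨-minimal clause implied by `M`. -/
def isPrimeImplicateOf (M : (∀ X, D X) → Prop) (σ : MvClause V D) : Prop :=
  (∀ w, M w → σ.csat w) ∧
  ∀ σ' : MvClause V D, (∀ w, M w → σ'.csat w) → clauseImp σ' σ → σ' = σ

/-- Remove subsumed terms: delete any term strictly implied by another in the set. -/
def removeSubsumedT (S : Set (MvTerm V D)) : Set (MvTerm V D) :=
  {τ ∈ S | ¬ ∃ τ' ∈ S, τ' ≠ τ ∧ termImp τ τ'}

/-- Remove subsumed clauses: delete any clause strictly implying another in the set. -/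
def removeSubsumedC (S : Set (MvClause V D)) : Set (MvClause V D) :=
  {σ ∈ S | ¬ ∃ σ' ∈ S, σ' ≠ σ ∧ clauseImp σ' σ}

end PrimeDefs

/-- Multi-valued consensus: `γ` is the `X`-consensus of terms `τ₁` and `τ₂`
(whose `X`-literals must not entail one another); `γ` being a well-formed term
enforces that the remaining conjunction is consistent. -/
def isConsensus {V : Type} {D : V → Type} (X : V)
    (τ₁ τ₂ γ : MvTerm V D) : Prop :=
  ¬ τ₁.lits X ⊆ τ₂.lits X ∧ ¬ τ₂.lits X ⊆ τ₁.lits X ∧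
  γ.lits X = τ₁.lits X ∪ τ₂.lits X ∧
  ∀ Y, Y ≠ X → γ.lits Y = τ₁.lits Y ∩ τ₂.lits Y

/-- Closure of a set of terms under multi-valued consensus. -/
inductive ConsClosure {V : Type} {D : V → Type} (S : Set (MvTerm V D)) :
    MvTerm V D → Prop
  | base {τ : MvTerm V D} : τ ∈ S → ConsClosure S τ
  | step {τ₁ τ₂ γ : MvTerm V D} (X : V) :
      ConsClosure S τ₁ → ConsClosure S τ₂ → isConsensus X τ₁ τ₂ γ → ConsClosure S γ

section Aux

variable {V : Type} {D : V → Type}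

lemma MvTerm.ext' {τ τ' : MvTerm V D} (h : τ.lits = τ'.lits) : τ = τ' := by
  cases τ; cases τ'; simp_all

lemma termImp_iff (τ τ' : MvTerm V D) :
    termImp τ τ' ↔ ∀ X, τ.lits X ⊆ τ'.lits X := by
  classical
  constructor
  · intro h X y hy
    have hsat : τ.tsat (Function.update (fun Z => (τ.nonempty Z).some) X y) := by
      intro Z
      by_cases hZ : Z = X
      · subst hZ; simpa using hy
      · simpa [Function.update_of_ne hZ] using (τ.nonempty Z).some_mem
    have := h _ hsat X
    simpa using this
  · intro h w hw X
    exact h X (hw X)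

lemma closure_sound {S : Set (MvTerm V D)} {γ : MvTerm V D}
    (h : ConsClosure S γ) : ∀ w, γ.tsat w → ∃ t ∈ S, MvTerm.tsat w t := by
  induction h with
  | base hτ => exact fun w hw => ⟨_, hτ, hw⟩
  | step X h1 h2 hc ih1 ih2 =>
    intro w hw
    obtain ⟨-, -, hX, hY⟩ := hc
    have hwX := hw X
    rw [hX] at hwX
    cases hwX with
    | inl hm =>
      refine ih1 w fun Y => ?_
      by_cases hYX : Y = X
      · subst hYX; exact hm
      · have := hw Y; rw [hY Y hYX] at this; exact this.1
    | inr hm =>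
      refine ih2 w fun Y => ?_
      by_cases hYX : Y = X
      · subst hYX; exact hm
      · have := hw Y; rw [hY Y hYX] at this; exact this.2

lemma closure_complete [Fintype V] [∀ X, Fintype (D X)] {S : Set (MvTerm V D)}
    (τ : MvTerm V D) (himp : ∀ w, τ.tsat w → ∃ t ∈ S, MvTerm.tsat w t) :
    ∃ γ, ConsClosure S γ ∧ ∀ X, τ.lits X ⊆ γ.lits X := by
  classical
  suffices H : ∀ n (τ : MvTerm V D), (∑ X : V, ((τ.lits X).ncard - 1)) ≤ n →
      (∀ w, τ.tsat w → ∃ t ∈ S, MvTerm.tsat w t) →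
      ∃ γ, ConsClosure S γ ∧ ∀ X, τ.lits X ⊆ γ.lits X from H _ τ le_rfl himp
  -- the base (all-singleton) case
  have base : ∀ (τ : MvTerm V D), (∀ X, ∃ a, τ.lits X = {a}) →
      (∀ w, τ.tsat w → ∃ t ∈ S, MvTerm.tsat w t) →
      ∃ γ, ConsClosure S γ ∧ ∀ X, τ.lits X ⊆ γ.lits X := by
    intro τ hs himp
    choose a ha using hs
    have hw : τ.tsat a := fun X => by rw [ha X]; exact rfl
    obtain ⟨t, htS, htw⟩ := himp a hw
    exact ⟨t, ConsClosure.base htS, fun X => by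
      rw [ha X]; simpa using htw X⟩
  intro n
  induction n with
  | zero =>
    intro τ hm himp
    refine base τ (fun X => ?_) himp
    have h1 : 1 ≤ (τ.lits X).ncard := by
      have : 0 < (τ.lits X).ncard :=
        (Set.ncard_pos (Set.toFinite _)).mpr (τ.nonempty X)
      omega
    have h2 : (τ.lits X).ncard - 1 ≤ 0 := le_trans
      (Finset.single_le_sum (f := fun Y => ((τ.lits Y).ncard - 1))
        (fun _ _ => Nat.zero_le _) (Finset.mem_univ X)) hm
    exact Set.ncard_eq_one.mp (by omega)
  | succ n ih =>
    intro τ hm himp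
    by_cases hex : ∃ X, 1 < (τ.lits X).ncard
    · obtain ⟨X, hX⟩ := hex
      -- for each x in the X-literal of τ, get a closure term covering τ with x at X
      have single : ∀ x ∈ τ.lits X, ∃ γ, ConsClosure S γ ∧ x ∈ γ.lits X ∧
          ∀ Y, Y ≠ X → τ.lits Y ⊆ γ.lits Y := by
        intro x hx
        set τx : MvTerm V D :=
          ⟨Function.update τ.lits X ({x} : Set (D X)), by
            intro Y
            by_cases hY : Y = X
            · subst hY; simp
            · rw [Function.update_of_ne hY]; exact τ.nonempty Y⟩ with hτx
        have hsub : ∀ w, τx.tsat w → τ.tsat w := by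
          intro w hw Y
          by_cases hY : Y = X
          · subst hY
            have := hw Y
            simp only [hτx, Function.update_self] at this
            rw [Set.mem_singleton_iff] at this
            rw [this]; exact hx
          · have := hw Y
            simpa [hτx, Function.update_of_ne hY] using this
        have hmeas : (∑ Y : V, ((τx.lits Y).ncard - 1)) ≤ n := by
          have hlt : (∑ Y : V, ((τx.lits Y).ncard - 1)) <
              (∑ Y : V, ((τ.lits Y).ncard - 1)) := by
            refine Finset.sum_lt_sum (fun Y _ => ?_) ⟨X, Finset.mem_univ X, ?_⟩
            · by_cases hY : Y = X
              · subst hY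
                simp only [hτx, Function.update_self, Set.ncard_singleton]
                omega
              · simp [hτx, Function.update_of_ne hY]
            · simp only [hτx, Function.update_self, Set.ncard_singleton]
              omega
          omega
        obtain ⟨γ, hγcl, hγsub⟩ := ih τx hmeas (fun w hw => himp w (hsub w hw))
        refine ⟨γ, hγcl, ?_, fun Y hY => ?_⟩
        · have := hγsub X
          simp only [hτx, Function.update_self] at this
          exact this rfl
        · have := hγsub Y
          simpa [hτx, Function.update_of_ne hY] using this
      -- combine them by consensus over finite subsets of the X-literal
      have inner : ∀ (A : Finset (D X)), A.Nonempty → ↑A ⊆ τ.lits X →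
          ∃ γ, ConsClosure S γ ∧ ↑A ⊆ γ.lits X ∧
            ∀ Y, Y ≠ X → τ.lits Y ⊆ γ.lits Y := by
        intro A
        induction A using Finset.induction with
        | empty => intro h; exact absurd rfl h.ne_empty
        | insert x A hxA ihA =>
          intro _ hsub
          have hxF : x ∈ τ.lits X := hsub (by simp)
          obtain ⟨γ₂, hγ₂cl, hγ₂x, hγ₂Y⟩ := single x hxF
          rcases A.eq_empty_or_nonempty with hA | hA
          · subst hA
            exact ⟨γ₂, hγ₂cl, by simpa using hγ₂x, hγ₂Y⟩
          · obtain ⟨γ₁, hγ₁cl, hγ₁A, hγ₁Y⟩ := ihA hA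
              (fun y hy => hsub (by simp [hy]))
            by_cases hxγ₁ : x ∈ γ₁.lits X
            · exact ⟨γ₁, hγ₁cl, by
                rw [Finset.coe_insert]
                exact Set.insert_subset hxγ₁ hγ₁A, hγ₁Y⟩
            by_cases h12 : γ₁.lits X ⊆ γ₂.lits X
            · refine ⟨γ₂, hγ₂cl, ?_, hγ₂Y⟩
              rw [Finset.coe_insert]
              exact Set.insert_subset hγ₂x (hγ₁A.trans h12)
            have h21 : ¬ γ₂.lits X ⊆ γ₁.lits X := fun h => hxγ₁ (h hγ₂x)
            set γ : MvTerm V D :=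
              ⟨Function.update (fun Y => γ₁.lits Y ∩ γ₂.lits Y) X
                (γ₁.lits X ∪ γ₂.lits X), by
                intro Y
                by_cases hY : Y = X
                · subst hY
                  rw [Function.update_self]
                  exact (γ₁.nonempty Y).mono Set.subset_union_left
                · rw [Function.update_of_ne hY]
                  exact (τ.nonempty Y).mono
                    (Set.subset_inter (hγ₁Y Y hY) (hγ₂Y Y hY))⟩ with hγ
            have hcons : isConsensus X γ₁ γ₂ γ := by
              refine ⟨h12, h21, ?_, fun Y hY => ?_⟩
              · simp [hγ]
              · simp [hγ, Function.update_of_ne hY]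
            refine ⟨γ, ConsClosure.step X hγ₁cl hγ₂cl hcons, ?_, fun Y hY => ?_⟩
            · rw [Finset.coe_insert, hγ]
              simp only [Function.update_self]
              exact Set.insert_subset (Set.mem_union_right _ hγ₂x)
                (hγ₁A.trans Set.subset_union_left)
            · show τ.lits Y ⊆ Function.update (fun Z => γ₁.lits Z ∩ γ₂.lits Z) X
                (γ₁.lits X ∪ γ₂.lits X) Y
              rw [Function.update_of_ne hY]
              exact Set.subset_inter (hγ₁Y Y hY) (hγ₂Y Y hY)
      obtain ⟨γ, hγcl, hγX, hγY⟩ := inner (τ.lits X).toFinset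
        (by simpa [Set.toFinset_nonempty] using τ.nonempty X)
        (by simp)
      refine ⟨γ, hγcl, fun Y => ?_⟩
      by_cases hY : Y = X
      · subst hY
        intro y hy
        exact hγX (by simpa using hy)
      · exact hγY Y hY
    · push_neg at hex
      refine base τ (fun X => ?_) himp
      have h1 : 0 < (τ.lits X).ncard :=
        (Set.ncard_pos (Set.toFinite _)).mpr (τ.nonempty X)
      exact Set.ncard_eq_one.mp (by have := hex X; omega)

end Aux

/-- closing a DNF under multi-valued consensus and removing
subsumed terms yields exactly the DNF's prime implicants. -/
theorem consensus_closure_prime_implicants {V : Type} {D : V → Type}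
    [Fintype V] [∀ X, Fintype (D X)] (hcard : ∀ X, 1 < Fintype.card (D X))
    (S : Set (MvTerm V D)) :
    removeSubsumedT {τ : MvTerm V D | ConsClosure S τ} =
    {τ : MvTerm V D |
      isPrimeImplicantOf (fun w => ∃ t ∈ S, MvTerm.tsat w t) τ} := by
  classical
  ext τ
  simp only [removeSubsumedT, Set.mem_setOf_eq, isPrimeImplicantOf,
    Set.mem_sep_iff]
  constructor
  · rintro ⟨hcl, hns⟩
    refine ⟨fun w hw => closure_sound hcl w hw, ?_⟩
    intro τ' himp' hτimp
    obtain ⟨γ, hγcl, hγsub⟩ := closure_complete τ' himp'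
    have hτ'γ : termImp τ' γ := (termImp_iff _ _).mpr hγsub
    have hτγ : termImp τ γ := fun w hw => hτ'γ w (hτimp w hw)
    have hγτ : γ = τ := by
      by_contra hne
      exact hns ⟨γ, hγcl, hne, hτγ⟩
    subst hγτ
    refine MvTerm.ext' (funext fun X => subset_antisymm ?_ ?_)
    · exact hγsub X
    · exact (termImp_iff _ _).mp hτimp X
  · rintro ⟨himp, hmax⟩
    obtain ⟨γ, hγcl, hγsub⟩ := closure_complete τ himp
    have hγimp : ∀ w, γ.tsat w → ∃ t ∈ S, MvTerm.tsat w t :=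
      fun w hw => closure_sound hγcl w hw
    have hγτ : γ = τ := hmax γ hγimp ((termImp_iff _ _).mpr hγsub)
    subst hγτ
    refine ⟨hγcl, ?_⟩
    rintro ⟨τ'', hcl'', hne, himp''⟩
    exact hne (hmax τ'' (fun w hw => closure_sound hcl'' w hw) himp'')
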